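/- For θ > 0 and k ≥ 1, let V_{1,θ}(h) = (2/(log 2)^{θ+1}) · h · |log h|^{θ+1} and ω_k(h) = h(log(1/h^k) + 1) for small h > 0. Then lim_{h→0} ω_k(h)/V_{1,θ}(h) = 0, yet for every ξ > 1, lim_{h→0} [ω_k(ξh)/V_{1,θ}(ξh)] · [V_{1,θ}(h)/ω_k(h)] = 1; consequently the pair (ω_k, V_{1,θ}) satisfies the limit condition lim_{h→0} ω(h)/V(h) = 0 but fails Assumption A (there are no γ > 0, ξ₀ > 1, η₀ ∈ (0,1) with ω_k(ξh)/V_{1,θ}(ξh) ≥ ξ^γ ω_k(h)/V_{1,θ}(h) for all h ∈ (0,η₀), ξ ∈ (1,ξ₀]). -/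

import Mathlib

open Set Filter Topology Real

noncomputable section

/-- `V_{1,θ}(h) = (2/(log 2)^{θ+1}) · h · |log h|^{θ+1}`. -/
noncomputable def Vonetheta (θ : ℝ) : ℝ → ℝ := fun h =>
  (2 / Real.log 2 ^ (θ + 1)) * h * |Real.log h| ^ (θ + 1)

/-- `ω_k(h) = h (log(1/h^k) + 1)`. -/
noncomputable def omegak (k : ℝ) : ℝ → ℝ := fun h => h * (Real.log (1 / h ^ k) + 1)

/-- The key auxiliary function: ratio as a function of `t = -log h`. -/
noncomputable def rrAux (θ k : ℝ) : ℝ → ℝ := fun t =>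
  (1 + k * t) / ((2 / Real.log 2 ^ (θ + 1)) * t ^ (θ + 1))

lemma Cpos (θ : ℝ) : 0 < 2 / Real.log 2 ^ (θ + 1) := by
  apply div_pos two_pos
  exact Real.rpow_pos_of_pos (Real.log_pos one_lt_two) _

lemma rrAux_pos {θ k t : ℝ} (hk : 1 ≤ k) (ht : 0 < t) : 0 < rrAux θ k t := by
  apply div_pos
  · nlinarith
  · exact mul_pos (Cpos θ) (Real.rpow_pos_of_pos ht _)

lemma ratio_eq (θ k : ℝ) {h : ℝ} (h0 : 0 < h) (h1 : h < 1) :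
    omegak k h / Vonetheta θ h = rrAux θ k (-Real.log h) := by
  have hlog : Real.log h < 0 := Real.log_neg h0 h1
  unfold omegak Vonetheta rrAux
  rw [one_div, Real.log_inv, Real.log_rpow h0, abs_of_nonpos hlog.le]
  have hX : (0:ℝ) < (-Real.log h) ^ (θ + 1) :=
    Real.rpow_pos_of_pos (by linarith) _
  rw [show (2 / Real.log 2 ^ (θ + 1)) * h * (-Real.log h) ^ (θ + 1)
      = h * ((2 / Real.log 2 ^ (θ + 1)) * (-Real.log h) ^ (θ + 1)) by ring,
    mul_div_mul_left _ _ (ne_of_gt h0)]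
  ring_nf

lemma rrAux_tendsto_zero (θ k : ℝ) (hθ : 0 < θ) :
    Tendsto (rrAux θ k) atTop (𝓝 0) := by
  set C := 2 / Real.log 2 ^ (θ + 1) with hC
  have hCpos : 0 < C := Cpos θ
  clear_value C
  have heq : ∀ᶠ t in atTop, C⁻¹ * (t ^ (-(θ + 1)) + k * t ^ (-θ)) = rrAux θ k t := by
    filter_upwards [eventually_gt_atTop (0:ℝ)] with t ht
    unfold rrAux
    rw [← hC]
    rw [show -θ = 1 - (θ + 1) by ring, Real.rpow_sub ht, Real.rpow_one,
      Real.rpow_neg ht.le]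
    have hX : (0:ℝ) < t ^ (θ + 1) := Real.rpow_pos_of_pos ht _
    rw [eq_div_iff (mul_pos hCpos hX).ne']
    field_simp
  have hlim : Tendsto (fun t => C⁻¹ * (t ^ (-(θ + 1)) + k * t ^ (-θ))) atTop
      (𝓝 (C⁻¹ * (0 + k * 0))) := by
    exact (((tendsto_rpow_neg_atTop (by linarith)).add
      ((tendsto_rpow_neg_atTop hθ).const_mul k)).const_mul _)
  rw [mul_zero, add_zero, mul_zero] at hlim
  exact hlim.congr' heq

lemma rrAux_ratio (θ k a : ℝ) (hθ : 0 < θ) (hk : 1 ≤ k) :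
    Tendsto (fun t => rrAux θ k (t - a) * (rrAux θ k t)⁻¹) atTop (𝓝 1) := by
  set C := 2 / Real.log 2 ^ (θ + 1) with hC
  have hCpos : 0 < C := Cpos θ
  clear_value C
  -- factor 1
  have h1 : Tendsto (fun t : ℝ => (1 + k * (t - a)) / (1 + k * t)) atTop (𝓝 1) := by
    have heq : ∀ᶠ t in atTop, (t⁻¹ + k - k * a * t⁻¹) / (t⁻¹ + k)
        = (1 + k * (t - a)) / (1 + k * t) := by
      filter_upwards [eventually_gt_atTop (0:ℝ), eventually_gt_atTop (max 0 ((a-1)*k))]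
        with t ht ht2
      have hd1 : 1 + k * t ≠ 0 := by nlinarith
      have hd2 : t⁻¹ + k ≠ 0 := by positivity
      have ht0 : t ≠ 0 := ne_of_gt ht
      rw [div_eq_div_iff hd2 hd1]
      field_simp
      ring
    have hnum : Tendsto (fun t : ℝ => t⁻¹ + k - k * a * t⁻¹) atTop (𝓝 k) := by
      have := (tendsto_inv_atTop_zero.add_const k).sub
        (tendsto_inv_atTop_zero.const_mul (k * a))
      simpa using this
    have hden : Tendsto (fun t : ℝ => t⁻¹ + k) atTop (𝓝 k) :=
      by simpa using tendsto_inv_atTop_zero.add_const k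
    have hk0 : k ≠ 0 := by linarith
    have := hnum.div hden hk0
    rw [div_self hk0] at this
    exact this.congr' heq
  -- factor 2
  have h2base : Tendsto (fun t : ℝ => t / (t - a)) atTop (𝓝 1) := by
    have heq : ∀ᶠ t in atTop, (1 - a * t⁻¹)⁻¹ = t / (t - a) := by
      filter_upwards [eventually_gt_atTop (max 0 a)] with t ht
      have ht0 : (0:ℝ) < t := lt_of_le_of_lt (le_max_left _ _) ht
      have hta : t - a ≠ 0 := by
        have := lt_of_le_of_lt (le_max_right 0 a) ht; linarith
      field_simp
    have : Tendsto (fun t : ℝ => (1 - a * t⁻¹)⁻¹) atTop (𝓝 (1 - a * 0)⁻¹) := by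
      exact ((tendsto_const_nhds.sub (tendsto_inv_atTop_zero.const_mul a)).inv₀
        (by norm_num))
    rw [mul_zero, sub_zero, inv_one] at this
    exact this.congr' heq
  have h2 : Tendsto (fun t : ℝ => (t / (t - a)) ^ (θ + 1)) atTop (𝓝 1) := by
    have hc : ContinuousAt (fun x : ℝ => x ^ (θ + 1)) 1 :=
      Real.continuousAt_rpow_const 1 (θ + 1) (Or.inl one_ne_zero)
    have := hc.tendsto.comp h2base
    simpa [Function.comp_def, Real.one_rpow] using this
  -- combine
  have heq : ∀ᶠ t in atTop,
      (1 + k * (t - a)) / (1 + k * t) * (t / (t - a)) ^ (θ + 1)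
      = rrAux θ k (t - a) * (rrAux θ k t)⁻¹ := by
    filter_upwards [eventually_gt_atTop (max 0 a)] with t ht
    have ht0 : (0:ℝ) < t := lt_of_le_of_lt (le_max_left _ _) ht
    have hta : (0:ℝ) < t - a := by
      have := lt_of_le_of_lt (le_max_right 0 a) ht; linarith
    have hX : (0:ℝ) < t ^ (θ + 1) := Real.rpow_pos_of_pos ht0 _
    have hX' : (0:ℝ) < (t - a) ^ (θ + 1) := Real.rpow_pos_of_pos hta _
    have hN : (0:ℝ) < 1 + k * t := by nlinarith
    have hN' : (0:ℝ) < 1 + k * (t - a) := by nlinarith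
    unfold rrAux
    rw [← hC, Real.div_rpow ht0.le hta.le]
    field_simp
  have := h1.mul h2
  rw [mul_one] at this
  exact this.congr' heq

theorem limit_zero_but_assumptionA_fails (θ k : ℝ) (hθ : 0 < θ) (hk : 1 ≤ k) :
    Tendsto (fun h => omegak k h / Vonetheta θ h) (𝓝[>] 0) (𝓝 0) ∧
    (∀ ξ > (1:ℝ), Tendsto
      (fun h => omegak k (ξ * h) / Vonetheta θ (ξ * h) * (Vonetheta θ h / omegak k h))
      (𝓝[>] 0) (𝓝 1)) ∧
    ¬ ∃ γ > (0:ℝ), ∃ ξ₀ > (1:ℝ), ∃ η₀ ∈ Ioo (0:ℝ) 1,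
        ∀ h ∈ Ioo (0:ℝ) η₀, ∀ ξ ∈ Ioc (1:ℝ) ξ₀,
          ξ ^ γ * (omegak k h / Vonetheta θ h) ≤ omegak k (ξ * h) / Vonetheta θ (ξ * h) := by
  have hneglog : Tendsto (fun h : ℝ => -Real.log h) (𝓝[>] 0) atTop :=
    tendsto_neg_atBot_atTop.comp Real.tendsto_log_nhdsGT_zero
  have heq1 : ∀ᶠ h in 𝓝[>] (0:ℝ),
      rrAux θ k (-Real.log h) = omegak k h / Vonetheta θ h := by
    filter_upwards [Ioo_mem_nhdsGT_of_mem (by constructor <;> norm_num :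
      (0:ℝ) ∈ Ico (0:ℝ) 1)] with h hh
    exact (ratio_eq θ k hh.1 hh.2).symm
  have part1 : Tendsto (fun h => omegak k h / Vonetheta θ h) (𝓝[>] 0) (𝓝 0) :=
    (((rrAux_tendsto_zero θ k hθ).comp hneglog).congr' heq1)
  have part2 : ∀ ξ > (1:ℝ), Tendsto
      (fun h => omegak k (ξ * h) / Vonetheta θ (ξ * h) * (Vonetheta θ h / omegak k h))
      (𝓝[>] 0) (𝓝 1) := by
    intro ξ hξ
    have hξ0 : (0:ℝ) < ξ := by linarith
    have heq : ∀ᶠ h in 𝓝[>] (0:ℝ),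
        ((fun t => rrAux θ k (t - Real.log ξ) * (rrAux θ k t)⁻¹) ∘
          (fun h : ℝ => -Real.log h)) h
        = omegak k (ξ * h) / Vonetheta θ (ξ * h) * (Vonetheta θ h / omegak k h) := by
      filter_upwards [Ioo_mem_nhdsGT_of_mem
        (⟨le_refl 0, by positivity⟩ : (0:ℝ) ∈ Ico (0:ℝ) (min 1 ξ⁻¹))]
        with h hh
      obtain ⟨h0, hlt⟩ := hh
      have h1 : h < 1 := lt_of_lt_of_le hlt (min_le_left _ _)
      have hξh0 : 0 < ξ * h := by positivity
      have hξh1 : ξ * h < 1 := by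
        have hh' : h < ξ⁻¹ := lt_of_lt_of_le hlt (min_le_right _ _)
        calc ξ * h < ξ * ξ⁻¹ := (mul_lt_mul_iff_right₀ hξ0).mpr hh'
        _ = 1 := mul_inv_cancel₀ (ne_of_gt hξ0)
      have e1 : Vonetheta θ h / omegak k h = (omegak k h / Vonetheta θ h)⁻¹ :=
        (inv_div _ _).symm
      rw [ratio_eq θ k hξh0 hξh1, e1, ratio_eq θ k h0 h1,
        Real.log_mul (ne_of_gt hξ0) (ne_of_gt h0)]
      simp only [Function.comp]
      congr 2
      ring
    exact ((rrAux_ratio θ k (Real.log ξ) hθ hk).comp hneglog).congr' heq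
  refine ⟨part1, part2, ?_⟩
  rintro ⟨γ, hγ, ξ₀, hξ₀, η₀, ⟨hη0, hη1⟩, H⟩
  have hQ := part2 ξ₀ hξ₀
  have hξ₀0 : (0:ℝ) < ξ₀ := by linarith
  have hev : ∀ᶠ h in 𝓝[>] (0:ℝ), ξ₀ ^ γ ≤
      omegak k (ξ₀ * h) / Vonetheta θ (ξ₀ * h) * (Vonetheta θ h / omegak k h) := by
    filter_upwards [Ioo_mem_nhdsGT_of_mem
      (⟨le_refl 0, hη0⟩ : (0:ℝ) ∈ Ico (0:ℝ) η₀)] with h hh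
    have h1 : h < 1 := lt_trans hh.2 hη1
    have key := H h hh ξ₀ ⟨hξ₀, le_refl ξ₀⟩
    have hfpos : 0 < omegak k h / Vonetheta θ h := by
      rw [ratio_eq θ k hh.1 h1]
      exact rrAux_pos hk (by simpa using Real.log_neg hh.1 h1)
    have := (le_div_iff₀ hfpos).mpr key
    rw [div_eq_mul_inv, ← inv_div (Vonetheta θ h) (omegak k h), inv_inv] at this
    exact this
  have hle : ξ₀ ^ γ ≤ 1 := ge_of_tendsto hQ hev
  have hgt : (1:ℝ) < ξ₀ ^ γ :=
    (Real.one_lt_rpow_iff_of_pos hξ₀0).mpr (Or.inl ⟨hξ₀, hγ⟩)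
  linarith

end
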